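/- Let R be a ring whose underlying additive group is torsion-free as a ℤ-module, and let p be a prime. If Ω ∈ R is idempotent modulo p^k for some k > 0 (i.e., Ω² - Ω ∈ p^k R), then Ω^p is idempotent modulo p^(k+1) (i.e., Ω^(2p) - Ω^p ∈ p^(k+1) R). -/
import Mathlib


/-- If `R` is a ring, torsion-free as `ℤ`-module, `p` prime, and `Ω` is idempotent
modulo `p^k` for some `k > 0`, then `Ω^p` is idempotent modulo `p^(k+1)`. -/
theorem stmt2 {R : Type*} [Ring R] [NoZeroSMulDivisors ℤ R] (p k : ℕ) (hp : p.Prime)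
    (hk : 0 < k) (Ω : R) (h : ∃ Λ : R, Ω ^ 2 - Ω = ((p : ℤ) ^ k) • Λ) :
    ∃ Λ' : R, Ω ^ (2 * p) - Ω ^ p = ((p : ℤ) ^ (k + 1)) • Λ' := by
  obtain ⟨Λ, hΛ⟩ := h
  rw [zsmul_eq_mul] at hΛ
  push_cast at hΛ
  have hΛ' : Ω ^ 2 = Ω + (p : R) ^ k * Λ := by rw [← hΛ]; abel
  have hc : ∀ (a : ℕ) (x : R), (p : R) ^ a * x = x * (p : R) ^ a :=
    fun a x => ((Nat.cast_commute p x).pow_left a).eq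
  have cΛ : Commute ((p : R) ^ k) Λ := (Nat.cast_commute p Λ).pow_left k
  have cΩ : Commute ((p : R) ^ k) Ω := (Nat.cast_commute p Ω).pow_left k
  -- Ω and Λ commute
  have hpk : ((p : ℤ) ^ k) ≠ 0 := pow_ne_zero _ (by exact_mod_cast hp.ne_zero)
  have h2 : ((p : ℤ) ^ k) • (Ω * Λ - Λ * Ω) = 0 := by
    have h1 : Ω * (Ω + (p : R) ^ k * Λ) = (Ω + (p : R) ^ k * Λ) * Ω := by
      rw [← hΛ']; exact ((Commute.refl Ω).pow_right 2).eq
    rw [mul_add, add_mul] at h1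
    have h3 := add_left_cancel h1
    rw [zsmul_eq_mul]
    push_cast
    have e1 : (p : R) ^ k * (Ω * Λ) = (p : R) ^ k * (Λ * Ω) := by
      rw [← mul_assoc, hc k Ω, mul_assoc, h3, mul_assoc]
    rw [mul_sub, e1, sub_self]
  have hcomm : Commute Ω Λ := by
    have := (smul_eq_zero.mp h2).resolve_left hpk
    exact sub_eq_zero.mp this
  have hΩcΛ : Commute Ω ((p : R) ^ k * Λ) := cΩ.symm.mul_right hcomm
  -- binomial expansion
  have hpow : Ω ^ (2 * p) =
      ∑ m ∈ Finset.range (p + 1), Ω ^ m * ((p : R) ^ k * Λ) ^ (p - m) * (p.choose m : R) := by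
    rw [pow_mul, hΛ', hΩcΛ.add_pow]
  have hsub : Ω ^ (2 * p) - Ω ^ p =
      ∑ m ∈ Finset.range p, Ω ^ m * ((p : R) ^ k * Λ) ^ (p - m) * (p.choose m : R) := by
    rw [hpow, Finset.sum_range_succ, Nat.sub_self, Nat.choose_self]
    simp
  have key : ∀ m, Ω ^ m * ((p : R) ^ k * Λ) ^ (p - m) * (p.choose m : R) =
      (p : R) ^ (k * (p - m)) * (Ω ^ m * Λ ^ (p - m) * (p.choose m : R)) := by
    intro m
    rw [cΛ.mul_pow, ← pow_mul, ← mul_assoc, ← hc (k * (p - m)) (Ω ^ m)]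
    noncomm_ring
  have hdvd : (p : R) ^ (k + 1) ∣
      ∑ m ∈ Finset.range p, Ω ^ m * ((p : R) ^ k * Λ) ^ (p - m) * (p.choose m : R) := by
    apply Finset.dvd_sum
    intro m hm
    have hmp : m < p := Finset.mem_range.mp hm
    rw [key m]
    rcases Nat.eq_zero_or_pos m with h0 | h0
    · subst h0
      refine Dvd.dvd.mul_right (pow_dvd_pow _ ?_) _
      simp only [Nat.sub_zero]
      nlinarith [hp.two_le, hk]
    · obtain ⟨t, ht⟩ := hp.dvd_choose_self h0.ne' hmp
      have hC : (p.choose m : R) = (p : R) * (t : R) := by rw [ht]; push_cast; ring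
      have hc1 : ∀ x : R, (p : R) * x = x * (p : R) := fun x => (Nat.cast_commute p x).eq
      have e2 : Ω ^ m * Λ ^ (p - m) * ((p : R) * (t : R))
          = (p : R) * (Ω ^ m * Λ ^ (p - m) * (t : R)) := by
        rw [← mul_assoc, ← hc1 (Ω ^ m * Λ ^ (p - m)), mul_assoc]
      rw [hC, e2, ← mul_assoc, ← pow_succ]
      refine Dvd.dvd.mul_right (pow_dvd_pow _ ?_) _
      have : 1 ≤ p - m := by omega
      nlinarith [hk]
  obtain ⟨w, hw⟩ := hdvd
  refine ⟨w, ?_⟩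
  rw [hsub, hw, zsmul_eq_mul]
  norm_cast
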